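/- In the independent thresholds model, the value of any deterministic sequence of actions (x_t) is at most the value of the best constant policy sup_x r(x)(1-F(x))/(1 - γ(1-F(x))). -/
import Mathlib


/-- Independent thresholds model: the value of any deterministic sequence of
actions `(x_t)`, namely `∑_t γ^t r(x_t) ∏_{s ≤ t} (1-F(x_s))`, is at most the
value `V*` of the best constant policy, where `V*` is an upper bound for
`r(x)(1-F(x))/(1 - γ(1-F(x)))` over all actions. -/
theorem independent_thresholds_dynamic_at_most_constant
    (F : ℝ → ℝ) (hF01 : ∀ y, 0 ≤ F y ∧ F y ≤ 1)
    (r : ℝ → ℝ) (hr : ∀ y, 0 ≤ r y) (B : ℝ) (hrB : ∀ y, r y ≤ B)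
    (γ : ℝ) (hγ : γ ∈ Set.Ioo (0 : ℝ) 1)
    (Vstar : ℝ)
    (hVub : ∀ y : ℝ, r y * (1 - F y) / (1 - γ * (1 - F y)) ≤ Vstar)
    (hVlub : ∀ W : ℝ, (∀ y : ℝ, r y * (1 - F y) / (1 - γ * (1 - F y)) ≤ W) → Vstar ≤ W)
    (x : ℕ → ℝ) :
    (∑' t : ℕ, γ ^ t * r (x t) * ∏ s ∈ Finset.range (t + 1), (1 - F (x s)))
      ≤ Vstar := by
  obtain ⟨hγ0, hγ1⟩ := hγ
  have hq0 : ∀ y, (0:ℝ) ≤ 1 - F y := fun y => by linarith [(hF01 y).2]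
  have hq1 : ∀ y, (1:ℝ) - F y ≤ 1 := fun y => by linarith [(hF01 y).1]
  have hd : ∀ y, (0:ℝ) < 1 - γ * (1 - F y) := fun y => by nlinarith [hq0 y, hq1 y]
  have hV0 : 0 ≤ Vstar := by
    refine le_trans ?_ (hVub 0)
    exact div_nonneg (mul_nonneg (hr 0) (hq0 0)) (le_of_lt (hd 0))
  -- key pointwise inequality
  have hkey : ∀ y, r y * (1 - F y) ≤ Vstar * (1 - γ * (1 - F y)) := fun y => by
    have := (div_le_iff₀ (hd y)).mp (hVub y)
    linarith
  set P : ℕ → ℝ := fun t => ∏ s ∈ Finset.range t, (1 - F (x s)) with hP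
  have hPnn : ∀ t, 0 ≤ P t := fun t => Finset.prod_nonneg (fun s _ => hq0 (x s))
  set g : ℕ → ℝ := fun t => γ ^ t * P t with hg
  have hgnn : ∀ t, 0 ≤ g t := fun t => mul_nonneg (pow_nonneg hγ0.le t) (hPnn t)
  have hterm : ∀ t, γ ^ t * r (x t) * ∏ s ∈ Finset.range (t + 1), (1 - F (x s))
      ≤ Vstar * (g t - g (t + 1)) := by
    intro t
    have hps : P (t + 1) = P t * (1 - F (x t)) := Finset.prod_range_succ _ _
    have h1 := hkey (x t)
    have h2 : 0 ≤ γ ^ t * P t := mul_nonneg (pow_nonneg hγ0.le t) (hPnn t)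
    have h3 : (γ ^ t * P t) * (r (x t) * (1 - F (x t)))
        ≤ (γ ^ t * P t) * (Vstar * (1 - γ * (1 - F (x t)))) :=
      mul_le_mul_of_nonneg_left h1 h2
    calc γ ^ t * r (x t) * ∏ s ∈ Finset.range (t + 1), (1 - F (x s))
        = (γ ^ t * P t) * (r (x t) * (1 - F (x t))) := by
          rw [Finset.prod_range_succ]; ring
      _ ≤ (γ ^ t * P t) * (Vstar * (1 - γ * (1 - F (x t)))) := h3
      _ = Vstar * (g t - g (t + 1)) := by
          simp only [hg, hps, pow_succ]; ring
  refine Real.tsum_le_of_sum_range_le (fun t => mul_nonneg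
    (mul_nonneg (pow_nonneg hγ0.le t) (hr (x t)))
    (Finset.prod_nonneg fun s _ => hq0 (x s))) (fun n => ?_)
  calc ∑ t ∈ Finset.range n, γ ^ t * r (x t) * ∏ s ∈ Finset.range (t + 1), (1 - F (x s))
        ≤ ∑ t ∈ Finset.range n, Vstar * (g t - g (t + 1)) :=
          Finset.sum_le_sum fun t _ => hterm t
      _ = Vstar * (g 0 - g n) := by
          rw [← Finset.mul_sum, Finset.sum_range_sub' g n]
      _ ≤ Vstar := by
          have : g 0 = 1 := by simp [hg, hP]
          nlinarith [hgnn n]
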